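/- Let (Ω,μ) be a finite measure space, X a Banach space, and 1 ≤ p < ∞. If a subset V of L^p(μ;X) is totally bounded, then V is uniformly tight. Equivalently (contrapositive): if V fails to be uniformly tight, then V contains a sequence (f_n)_{n≥1} with no Cauchy subsequence in L^p(μ;X). -/

import Mathlib

open MeasureTheory ENNReal

lemma cheby_aux {Ω : Type*} [MeasurableSpace Ω] {X : Type*} [NormedAddCommGroup X]
    (μ : Measure Ω) (p : ℝ≥0∞) (hp1 : 1 ≤ p) (hp' : p ≠ ∞)
    {δ : ℝ} (hδ : 0 < δ) {β : ℝ≥0∞} (hβ : 0 < β) :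
    ∃ η > (0 : ℝ), ∀ f g : Lp X p μ, dist f g < η →
      μ {ω | δ ≤ dist ((f : Ω → X) ω) ((g : Ω → X) ω)} ≤ β := by
  haveI : Fact (1 ≤ p) := ⟨hp1⟩
  have hp0 : p ≠ 0 := (zero_lt_one.trans_le hp1).ne'
  have hpr : 0 < p.toReal := ENNReal.toReal_pos hp0 hp'
  set c : ℝ≥0∞ := (ENNReal.ofReal δ)⁻¹ ^ p.toReal with hc
  have hδ0 : ENNReal.ofReal δ ≠ 0 := by simp [ENNReal.ofReal_pos.mpr hδ, ne_of_gt]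
  have hcne : c ≠ ∞ := by
    refine ENNReal.rpow_ne_top_of_nonneg hpr.le ?_
    simp [ENNReal.inv_ne_top, hδ0]
  have hc0 : c ≠ 0 := by
    have : (0:ℝ≥0∞) < (ENNReal.ofReal δ)⁻¹ := ENNReal.inv_pos.mpr ENNReal.ofReal_ne_top
    exact (ENNReal.rpow_pos this (by simp [hδ0])).ne'
  have hM : 0 < (β / c) ^ (1 / p.toReal) := by
    refine ENNReal.rpow_pos_of_nonneg ?_ (by positivity)
    exact ENNReal.div_pos hβ.ne' hcne
  obtain ⟨r, hr0, hrM⟩ := ENNReal.lt_iff_exists_nnreal_btwn.mp hM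
  have hrpos : (0 : ℝ) < (r : ℝ) := by exact_mod_cast ENNReal.coe_pos.mp hr0
  have hkey : c * (r : ℝ≥0∞) ^ p.toReal ≤ β := by
    have h1 : ((r : ℝ≥0∞)) ^ p.toReal ≤ β / c := by
      calc ((r : ℝ≥0∞)) ^ p.toReal ≤ ((β / c) ^ (1 / p.toReal)) ^ p.toReal :=
            ENNReal.rpow_le_rpow hrM.le hpr.le
        _ = β / c := by
            rw [← ENNReal.rpow_mul, one_div, inv_mul_cancel₀ hpr.ne', ENNReal.rpow_one]
    calc c * ((r : ℝ≥0∞)) ^ p.toReal ≤ c * (β / c) := by gcongr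
      _ = β := ENNReal.mul_div_cancel hc0 hcne
  refine ⟨r, hrpos, fun f g hfg => ?_⟩
  set h := f - g with hh
  have hnorm : ‖h‖ < (r : ℝ) := by rw [hh]; exact dist_eq_norm f g ▸ hfg
  have cheb := Lp.meas_ge_le_mul_pow_enorm h hp0 hp' (ε := ENNReal.ofReal δ) hδ0
  have hsub : {ω | δ ≤ dist ((f : Ω → X) ω) ((g : Ω → X) ω)} ⊆
      {x | ENNReal.ofReal δ ≤ (‖(h : Ω → X) x‖₊ : ℝ≥0∞)}
        ∪ {x | (h : Ω → X) x ≠ (f : Ω → X) x - (g : Ω → X) x} := by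
    intro ω hω
    by_cases he : (h : Ω → X) ω = (f : Ω → X) ω - (g : Ω → X) ω
    · left
      have : δ ≤ ‖(h : Ω → X) ω‖ := by
        rw [he, ← dist_eq_norm]; exact hω
      simpa using this
    · right; exact he
  have hnull : μ {x | (h : Ω → X) x ≠ (f : Ω → X) x - (g : Ω → X) x} = 0 := by
    have h2 : ∀ᵐ x ∂μ, (h : Ω → X) x = (f : Ω → X) x - (g : Ω → X) x := by
      filter_upwards [Lp.coeFn_sub f g] with x hx using hx
    simpa using ae_iff.mp h2
  calc μ {ω | δ ≤ dist ((f : Ω → X) ω) ((g : Ω → X) ω)}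
      ≤ μ ({x | ENNReal.ofReal δ ≤ (‖(h : Ω → X) x‖₊ : ℝ≥0∞)}
        ∪ {x | (h : Ω → X) x ≠ (f : Ω → X) x - (g : Ω → X) x}) := measure_mono hsub
    _ ≤ μ {x | ENNReal.ofReal δ ≤ (‖(h : Ω → X) x‖₊ : ℝ≥0∞)}
        + μ {x | (h : Ω → X) x ≠ (f : Ω → X) x - (g : Ω → X) x} := measure_union_le _ _
    _ = μ {x | ENNReal.ofReal δ ≤ (‖(h : Ω → X) x‖₊ : ℝ≥0∞)} := by rw [hnull, add_zero]
    _ ≤ (ENNReal.ofReal δ)⁻¹ ^ p.toReal * ENNReal.ofReal ‖h‖ ^ p.toReal := cheb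
    _ ≤ c * ((r : ℝ≥0∞)) ^ p.toReal := by
        rw [hc]
        gcongr
        rw [← ENNReal.ofReal_coe_nnreal]
        exact ENNReal.ofReal_le_ofReal hnorm.le
    _ ≤ β := hkey

/-- If a subset `V` of `L^p(μ;X)` (`(Ω,μ)` a finite measure space, `X` a Banach space,
`1 ≤ p < ∞`) is totally bounded, then `V` is uniformly tight: for every `ε > 0` there
is a compact `K ⊆ X` with `μ({f ∉ K}) ≤ ε` for all `f ∈ V`. -/
theorem uniformly_tight_of_totallyBounded
    {Ω : Type*} [MeasurableSpace Ω] {X : Type*} [NormedAddCommGroup X]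
    [NormedSpace ℝ X] [CompleteSpace X]
    (μ : Measure Ω) [IsFiniteMeasure μ] (p : ℝ≥0∞) [hp : Fact (1 ≤ p)] (hp' : p ≠ ∞)
    (V : Set (Lp X p μ)) (hV : TotallyBounded V) :
    ∀ ε : ℝ, 0 < ε → ∃ K : Set X, IsCompact K ∧
      ∀ f ∈ V, μ {ω | (f : Ω → X) ω ∉ K} ≤ ENNReal.ofReal ε := by
  intro ε hε
  rcases Set.eq_empty_or_nonempty V with hVe | hVne
  · exact ⟨∅, isCompact_empty, by simp [hVe]⟩
  rcases isEmpty_or_nonempty Ω with hΩ | hΩ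
  · refine ⟨∅, isCompact_empty, fun f hf => ?_⟩
    calc μ {ω | (f : Ω → X) ω ∉ (∅ : Set X)} ≤ μ Set.univ := measure_mono (Set.subset_univ _)
      _ = 0 := by rw [Set.univ_eq_empty_iff.mpr hΩ]; exact measure_empty
      _ ≤ _ := zero_le
  -- main case
  have key : ∀ k : ℕ, ∃ S : Set (Lp.simpleFunc X p μ), S.Finite ∧
      ∀ f ∈ V, ∃ s ∈ S,
        μ {ω | ((2:ℝ)⁻¹)^k ≤ dist ((f : Ω → X) ω) (((s : Lp X p μ) : Ω → X) ω)}
          ≤ ENNReal.ofReal ε * (2⁻¹ : ℝ≥0∞)^(k+1) := by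
    intro k
    have hδ : (0:ℝ) < ((2:ℝ)⁻¹)^k := by positivity
    have hβ : (0:ℝ≥0∞) < ENNReal.ofReal ε * (2⁻¹ : ℝ≥0∞)^(k+1) := by
      apply ENNReal.mul_pos
      · simp [ENNReal.ofReal_pos.mpr hε, ne_of_gt]
      · simp [pow_ne_zero]
    obtain ⟨η, hη, hcheb⟩ := cheby_aux (X := X) μ p hp.out hp' hδ hβ
    obtain ⟨t, htfin, htcov⟩ := Metric.totallyBounded_iff.mp hV (η/2) (by positivity)
    have hdense : ∀ y : Lp X p μ, ∃ s : Lp.simpleFunc X p μ, dist y (s : Lp X p μ) < η/2 :=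
      fun y => (Lp.simpleFunc.denseRange hp').exists_dist_lt y (by positivity)
    choose sf hsf using hdense
    refine ⟨sf '' t, htfin.image _, fun f hf => ?_⟩
    obtain ⟨y, hy, hfy⟩ := Set.mem_iUnion₂.mp (htcov hf)
    refine ⟨sf y, Set.mem_image_of_mem _ hy, hcheb _ _ ?_⟩
    calc dist f ((sf y : Lp X p μ)) ≤ dist f y + dist y (sf y : Lp X p μ) := dist_triangle _ _ _
      _ < η/2 + η/2 := by
          exact add_lt_add (Metric.mem_ball.mp hfy) (hsf y)
      _ = η := by ring
  choose S hSfin hS using key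
  set G : ℕ → Set X := fun k => ⋃ s ∈ S k, Set.range (Lp.simpleFunc.toSimpleFunc s) with hG
  have hGfin : ∀ k, (G k).Finite := fun k =>
    (hSfin k).biUnion fun s _ => SimpleFunc.finite_range _
  set K : Set X := ⋂ k, {x | Metric.infDist x (G k) ≤ ((2:ℝ)⁻¹)^k} with hK
  have hGne : ∀ k, (G k).Nonempty := by
    intro k
    obtain ⟨f, hf⟩ := hVne
    obtain ⟨s, hsS, -⟩ := hS k f hf
    exact ⟨Lp.simpleFunc.toSimpleFunc s (Classical.arbitrary Ω),
      Set.mem_biUnion hsS (Set.mem_range_self _)⟩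
  have hKclosed : IsClosed K := isClosed_iInter fun k =>
    isClosed_le (Metric.continuous_infDist_pt _) continuous_const
  have hKtb : TotallyBounded K := by
    rw [Metric.totallyBounded_iff]
    intro r hr
    obtain ⟨k, hk⟩ := exists_pow_lt_of_lt_one hr (by norm_num : (2:ℝ)⁻¹ < 1)
    refine ⟨G k, hGfin k, fun x hx => ?_⟩
    have hx' : Metric.infDist x (G k) < r :=
      lt_of_le_of_lt (Set.mem_iInter.mp hx k) hk
    obtain ⟨y, hyG, hyd⟩ := (Metric.infDist_lt_iff (hGne k)).mp hx'
    exact Set.mem_iUnion₂.mpr ⟨y, hyG, Metric.mem_ball.mpr hyd⟩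
  refine ⟨K, TotallyBounded.isCompact_of_isClosed hKtb hKclosed, fun f hf => ?_⟩
  choose s hsS hsμ using fun k => hS k f hf
  set A : ℕ → Set Ω := fun k =>
    {ω | ((2:ℝ)⁻¹)^k ≤ dist ((f : Ω → X) ω) (((s k : Lp X p μ) : Ω → X) ω)} with hA
  set N : ℕ → Set Ω := fun k =>
    {ω | ((s k : Lp X p μ) : Ω → X) ω ≠ Lp.simpleFunc.toSimpleFunc (s k) ω} with hN
  have hNnull : ∀ k, μ (N k) = 0 := by
    intro k
    have h2 : ∀ᵐ ω ∂μ, ((s k : Lp X p μ) : Ω → X) ω = Lp.simpleFunc.toSimpleFunc (s k) ω := by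
      filter_upwards [Lp.simpleFunc.toSimpleFunc_eq_toFun (s k)] with x hx using hx.symm
    simpa [hN] using ae_iff.mp h2
  have hsub : {ω | (f : Ω → X) ω ∉ K} ⊆ ⋃ k, (A k ∪ N k) := by
    intro ω hω
    by_contra hcon
    apply hω
    simp only [Set.mem_iUnion, not_exists, Set.mem_union, not_or] at hcon
    refine Set.mem_iInter.mpr fun k => ?_
    obtain ⟨hA1, hN1⟩ := hcon k
    have hA1' : dist ((f : Ω → X) ω) (((s k : Lp X p μ) : Ω → X) ω) < ((2:ℝ)⁻¹)^k :=
      not_le.mp hA1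
    have heq : ((s k : Lp X p μ) : Ω → X) ω = Lp.simpleFunc.toSimpleFunc (s k) ω :=
      not_not.mp hN1
    have hd : dist ((f : Ω → X) ω) (Lp.simpleFunc.toSimpleFunc (s k) ω) < ((2:ℝ)⁻¹)^k := by
      rw [← heq]; exact hA1'
    have hmem : Lp.simpleFunc.toSimpleFunc (s k) ω ∈ G k :=
      Set.mem_biUnion (hsS k) (Set.mem_range_self _)
    exact le_trans (Metric.infDist_le_dist_of_mem hmem) hd.le
  calc μ {ω | (f : Ω → X) ω ∉ K} ≤ μ (⋃ k, (A k ∪ N k)) := measure_mono hsub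
    _ ≤ ∑' k, μ (A k ∪ N k) := measure_iUnion_le _
    _ ≤ ∑' k, (μ (A k) + μ (N k)) := ENNReal.tsum_le_tsum fun k => measure_union_le _ _
    _ = ∑' k, μ (A k) := by simp [hNnull]
    _ ≤ ∑' k, ENNReal.ofReal ε * (2⁻¹ : ℝ≥0∞)^(k+1) := ENNReal.tsum_le_tsum fun k => hsμ k
    _ = ENNReal.ofReal ε * ∑' k : ℕ, (2⁻¹ : ℝ≥0∞)^(k+1) := ENNReal.tsum_mul_left
    _ = ENNReal.ofReal ε := by
        have : ∑' k : ℕ, (2⁻¹ : ℝ≥0∞)^(k+1) = 1 := by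
          simp_rw [pow_succ']
          rw [ENNReal.tsum_mul_left, ENNReal.tsum_geometric, ENNReal.one_sub_inv_two]
          exact ENNReal.mul_inv_cancel (by norm_num) (by norm_num)
        rw [this, mul_one]
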